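/- For every $n \ge 2$, the least one-step doubling constant of the path graph $L_n$ equals $1 + 2\cos\big(\frac{\pi}{n+1}\big)$; that is, $\inf_\mu \max_{1\le j\le n} \frac{\mu(B(j,1))}{\mu(j)} = 1 + 2\cos\big(\frac{\pi}{n+1}\big)$, where the infimum runs over all positive weight functions $\mu$ on $\{1,\dots,n\}$. -/

import Mathlib

open Finset Real

/-- The closed ball of center `j` and radius `k` in the path graph `L_n` on `{1,…,n}`. -/
def lball (n j k : ℕ) : Finset ℕ :=
  (Finset.Icc 1 n).filter fun i => j - k ≤ i ∧ i ≤ j + k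

/-- The radius-one doubling constant `C⁰_μ` of a weight `μ` on `L_n`. -/
noncomputable def C0 (n : ℕ) (μ : ℕ → ℝ) : ℝ :=
  sSup {x | ∃ j ∈ Finset.Icc 1 n, x = (∑ l ∈ lball n j 1, μ l) / μ j}

noncomputable def pv (n j : ℕ) : ℝ := Real.sin (j * (π / (n + 1)))

lemma pv_pos (n : ℕ) {j : ℕ} (hj : j ∈ Finset.Icc 1 n) : 0 < pv n j := by
  obtain ⟨h1, h2⟩ := Finset.mem_Icc.mp hj
  have hθ : 0 < π / (n + 1) := by positivity
  have hj0 : (0:ℝ) < j := by exact_mod_cast h1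
  apply Real.sin_pos_of_pos_of_lt_pi
  · positivity
  · have hle : (j:ℝ) ≤ n := by exact_mod_cast h2
    have : (j:ℝ) * (π / (n+1)) < ((n:ℝ)+1) * (π / (n+1)) := by
      apply mul_lt_mul_of_pos_right _ hθ; linarith
    have hne : ((n:ℝ)+1) ≠ 0 := by positivity
    calc (j:ℝ) * (π / (n+1)) < ((n:ℝ)+1) * (π / (n+1)) := this
      _ = π := by field_simp

lemma pv_eigen (n : ℕ) (hn : 2 ≤ n) {j : ℕ} (hj : j ∈ Finset.Icc 1 n) :
    ∑ l ∈ lball n j 1, pv n l = (1 + 2 * Real.cos (π / (n + 1))) * pv n j := by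
  obtain ⟨h1, h2⟩ := Finset.mem_Icc.mp hj
  set θ := π / (n + 1) with hθdef
  have hπ : ((n:ℝ) + 1) * θ = π := by
    have hne : ((n:ℝ)+1) ≠ 0 := by positivity
    rw [hθdef]; field_simp
  rcases eq_or_lt_of_le h1 with hj1 | hj1
  · -- j = 1
    have hb : lball n j 1 = {1, 2} := by
      ext i; simp only [lball, Finset.mem_filter, Finset.mem_Icc, Finset.mem_insert,
        Finset.mem_singleton]
      omega
    rw [hb, Finset.sum_pair (by omega)]
    subst hj1
    simp only [pv]
    push_cast
    rw [show (2:ℝ) * θ = θ + θ by ring, Real.sin_add]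
    rw [hθdef]; ring
  · rcases eq_or_lt_of_le h2 with hjn | hjn
    · -- j = n
      have hb : lball n j 1 = {n - 1, n} := by
        ext i; simp only [lball, Finset.mem_filter, Finset.mem_Icc, Finset.mem_insert,
          Finset.mem_singleton]
        omega
      rw [hjn] at hb ⊢
      rw [hb, Finset.sum_pair (by omega)]
      simp only [pv]
      have hc1 : ((n - 1 : ℕ) : ℝ) = (n:ℝ) - 1 := by
        have : 1 ≤ n := by omega
        push_cast [this]; ring
      rw [hc1]
      have e1 : ((n:ℝ) - 1) * θ = π - 2 * θ := by linarith
      have e2 : (n:ℝ) * θ = π - θ := by linarith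
      rw [e1, e2, Real.sin_pi_sub, Real.sin_pi_sub,
        show (2:ℝ) * θ = θ + θ by ring, Real.sin_add]
      ring
    · -- interior
      have hb : lball n j 1 = {j - 1, j, j + 1} := by
        ext i; simp only [lball, Finset.mem_filter, Finset.mem_Icc, Finset.mem_insert,
          Finset.mem_singleton]
        omega
      rw [hb]
      rw [Finset.sum_insert (by simp only [Finset.mem_insert, Finset.mem_singleton]; omega),
        Finset.sum_insert (by simp only [Finset.mem_singleton]; omega),
        Finset.sum_singleton]
      simp only [pv]
      have hc1 : ((j - 1 : ℕ) : ℝ) = (j:ℝ) - 1 := by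
        have : 1 ≤ j := h1
        push_cast [this]; ring
      rw [hc1]
      push_cast
      rw [show ((j:ℝ) - 1) * θ = (j:ℝ) * θ - θ by ring,
        show ((j:ℝ) + 1) * θ = (j:ℝ) * θ + θ by ring,
        Real.sin_sub, Real.sin_add]
      ring

lemma key_lower (n : ℕ) (hn : 2 ≤ n) (μ : ℕ → ℝ) (hμ : ∀ j ∈ Finset.Icc 1 n, 0 < μ j) :
    ∃ j ∈ Finset.Icc 1 n,
      1 + 2 * Real.cos (π / (n + 1)) ≤ (∑ l ∈ lball n j 1, μ l) / μ j := by
  set lam := 1 + 2 * Real.cos (π / (n + 1)) with hlam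
  by_contra h
  push_neg at h
  have hstep : ∀ j ∈ Finset.Icc 1 n, (∑ l ∈ lball n j 1, μ l) < lam * μ j := by
    intro j hj
    have := h j hj
    exact (div_lt_iff₀ (hμ j hj)).mp this
  -- symmetry of the double sum
  have hswap : ∑ j ∈ Finset.Icc 1 n, pv n j * ∑ l ∈ lball n j 1, μ l
      = ∑ l ∈ Finset.Icc 1 n, μ l * ∑ j ∈ lball n l 1, pv n j := by
    calc ∑ j ∈ Finset.Icc 1 n, pv n j * ∑ l ∈ lball n j 1, μ l
        = ∑ j ∈ Finset.Icc 1 n, ∑ l ∈ Finset.Icc 1 n,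
            if j - 1 ≤ l ∧ l ≤ j + 1 then pv n j * μ l else 0 := by
          refine Finset.sum_congr rfl fun j _ => ?_
          rw [lball, Finset.sum_filter, Finset.mul_sum]
          simp [mul_ite, mul_zero]
      _ = ∑ l ∈ Finset.Icc 1 n, ∑ j ∈ Finset.Icc 1 n,
            if j - 1 ≤ l ∧ l ≤ j + 1 then pv n j * μ l else 0 := Finset.sum_comm
      _ = ∑ l ∈ Finset.Icc 1 n, μ l * ∑ j ∈ lball n l 1, pv n j := by
          refine Finset.sum_congr rfl fun l hl => ?_
          rw [lball, Finset.sum_filter, Finset.mul_sum]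
          refine Finset.sum_congr rfl fun j hj => ?_
          have hl' : 1 ≤ l := (Finset.mem_Icc.mp hl).1
          have hj' : 1 ≤ j := (Finset.mem_Icc.mp hj).1
          have hiff : (j - 1 ≤ l ∧ l ≤ j + 1) ↔ (l - 1 ≤ j ∧ j ≤ l + 1) := by omega
          simp only [mul_ite, mul_zero]
          exact if_congr hiff (mul_comm _ _) rfl
  have hne : (Finset.Icc 1 n).Nonempty := ⟨1, Finset.mem_Icc.mpr ⟨le_refl _, by omega⟩⟩
  have hlt : ∑ j ∈ Finset.Icc 1 n, pv n j * ∑ l ∈ lball n j 1, μ l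
      < ∑ j ∈ Finset.Icc 1 n, pv n j * (lam * μ j) := by
    apply Finset.sum_lt_sum_of_nonempty hne
    intro j hj
    exact mul_lt_mul_of_pos_left (hstep j hj) (pv_pos n hj)
  have heq : ∑ l ∈ Finset.Icc 1 n, μ l * ∑ j ∈ lball n l 1, pv n j
      = ∑ j ∈ Finset.Icc 1 n, pv n j * (lam * μ j) := by
    refine Finset.sum_congr rfl fun l hl => ?_
    rw [pv_eigen n hn hl]
    ring
  rw [hswap, heq] at hlt
  exact lt_irrefl _ hlt

/-- For `n ≥ 2`, the least radius-one doubling constant of the path graph `L_n` is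
`C⁰_{L_n} = 1 + 2 cos(π/(n+1))`. -/
theorem stmt_7 (n : ℕ) (hn : 2 ≤ n) :
    sInf {c | ∃ μ : ℕ → ℝ, (∀ j ∈ Finset.Icc 1 n, 0 < μ j) ∧ c = C0 n μ}
      = 1 + 2 * Real.cos (π / (n + 1)) := by
  set lam := 1 + 2 * Real.cos (π / (n + 1)) with hlam
  set Cset : Set ℝ := {c | ∃ μ : ℕ → ℝ, (∀ j ∈ Finset.Icc 1 n, 0 < μ j) ∧ c = C0 n μ} with hCset
  -- the optimal weight achieves lam
  have hC0pv : C0 n (pv n) = lam := by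
    have hset : {x | ∃ j ∈ Finset.Icc 1 n, x = (∑ l ∈ lball n j 1, pv n l) / pv n j} = {lam} := by
      ext x
      simp only [Set.mem_setOf_eq, Set.mem_singleton_iff]
      constructor
      · rintro ⟨j, hj, rfl⟩
        rw [pv_eigen n hn hj, mul_div_assoc, div_self (pv_pos n hj).ne', mul_one]
      · rintro rfl
        have h1 : (1:ℕ) ∈ Finset.Icc 1 n := Finset.mem_Icc.mpr ⟨le_refl _, by omega⟩
        exact ⟨1, h1, by rw [pv_eigen n hn h1, mul_div_assoc, div_self (pv_pos n h1).ne', mul_one]⟩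
    rw [C0, hset, csSup_singleton]
  -- every C0 is ≥ lam
  have hlb : ∀ c ∈ Cset, lam ≤ c := by
    rintro c ⟨μ, hμ, rfl⟩
    obtain ⟨j, hj, hge⟩ := key_lower n hn μ hμ
    have hbdd : BddAbove {x | ∃ j ∈ Finset.Icc 1 n, x = (∑ l ∈ lball n j 1, μ l) / μ j} := by
      have : {x | ∃ j ∈ Finset.Icc 1 n, x = (∑ l ∈ lball n j 1, μ l) / μ j}
          = (fun j => (∑ l ∈ lball n j 1, μ l) / μ j) '' (Finset.Icc 1 n : Finset ℕ) := by
        ext x; simp [eq_comm]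
      rw [this]
      exact ((Finset.Icc 1 n).finite_toSet.image _).bddAbove
    exact le_trans hge (le_csSup hbdd ⟨j, hj, rfl⟩)
  have hmem : lam ∈ Cset := ⟨pv n, fun j hj => pv_pos n hj, hC0pv.symm⟩
  exact le_antisymm (csInf_le ⟨lam, hlb⟩ hmem) (le_csInf ⟨lam, hmem⟩ hlb)
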